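/- Let r ∈ ℝ, σ > 0, K₀ > 0 and T > 0, and let N denote the cumulative distribution function of the standard normal distribution. Define, for (t,s) ∈ (0,T)×(0,∞), d₊(t,s) := [ln(s/K₀) + (r + σ²/2)(T−t)]/(σ·√(T−t)), d₋(t,s) := [ln(s/K₀) + (r − σ²/2)(T−t)]/(σ·√(T−t)), and η(t,s) := s·N(d₊(t,s)) − K₀·e^{−r(T−t)}·N(d₋(t,s)). Then η satisfies the Black–Scholes PDE ∂η/∂t + r·s·∂η/∂s + (1/2)·σ²·s²·∂²η/∂s² = r·η at every point of (0,T)×(0,∞), and for every s > 0 one has η(t,s) → max(s−K₀, 0) as t ↑ T. -/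

import Mathlib

open MeasureTheory Real Filter Set

/-- The cumulative distribution function of the standard normal distribution. -/
noncomputable def stdN (x : ℝ) : ℝ :=
  ∫ u in Set.Iic x, Real.exp (-u^2 / 2) / Real.sqrt (2 * Real.pi)

noncomputable def dplus (r σ K₀ T t s : ℝ) : ℝ :=
  (Real.log (s / K₀) + (r + σ^2 / 2) * (T - t)) / (σ * Real.sqrt (T - t))

noncomputable def dminus (r σ K₀ T t s : ℝ) : ℝ :=
  (Real.log (s / K₀) + (r - σ^2 / 2) * (T - t)) / (σ * Real.sqrt (T - t))

/-- The Black–Scholes price of a European call option. -/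
noncomputable def bsCall (r σ K₀ T t s : ℝ) : ℝ :=
  s * stdN (dplus r σ K₀ T t s) - K₀ * Real.exp (-r * (T - t)) * stdN (dminus r σ K₀ T t s)

open Topology

noncomputable def stdPdf (x : ℝ) : ℝ := Real.exp (-x^2 / 2) / Real.sqrt (2 * Real.pi)

lemma stdPdf_cont : Continuous stdPdf := by
  unfold stdPdf; fun_prop

lemma stdPdf_eq (x : ℝ) : stdPdf x = Real.exp (-(1/2) * x^2) * (Real.sqrt (2*Real.pi))⁻¹ := by
  unfold stdPdf; rw [div_eq_mul_inv]; ring_nf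

lemma stdPdf_integrable : Integrable stdPdf := by
  have : Integrable (fun x : ℝ => Real.exp (-(1/2) * x^2)) := integrable_exp_neg_mul_sq (by norm_num)
  have := this.mul_const (Real.sqrt (2*Real.pi))⁻¹
  exact this.congr (Eventually.of_forall fun x => (stdPdf_eq x).symm)

lemma stdPdf_nonneg (x : ℝ) : 0 ≤ stdPdf x := by
  unfold stdPdf; positivity

lemma integral_stdPdf : ∫ x, stdPdf x = 1 := by
  have h := integral_gaussian (1/2)
  have h2 : Real.sqrt (Real.pi / (1/2)) = Real.sqrt (2 * Real.pi) := by norm_num [mul_comm]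
  have hpos : (0:ℝ) < Real.sqrt (2 * Real.pi) := Real.sqrt_pos.2 (by positivity)
  simp only [stdPdf_eq]
  rw [MeasureTheory.integral_mul_const, h, h2, mul_inv_cancel₀ hpos.ne']

lemma stdN_eq (x : ℝ) : stdN x = ∫ u in Set.Iic x, stdPdf u := rfl

lemma stdN_sub (x : ℝ) : stdN x = stdN 0 + ∫ u in (0:ℝ)..x, stdPdf u := by
  rw [stdN_eq, stdN_eq, ← intervalIntegral.integral_Iic_sub_Iic
    stdPdf_integrable.integrableOn stdPdf_integrable.integrableOn]
  ring

lemma hasDerivAt_stdN (x : ℝ) : HasDerivAt stdN (stdPdf x) x := by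
  have h : HasDerivAt (fun y => stdN 0 + ∫ u in (0:ℝ)..y, stdPdf u) (stdPdf x) x := by
    refine HasDerivAt.const_add _ ?_
    refine intervalIntegral.integral_hasDerivAt_right
      stdPdf_integrable.intervalIntegrable ?_ stdPdf_cont.continuousAt
    exact stdPdf_cont.stronglyMeasurableAtFilter _ _
  exact h.congr_of_eventuallyEq (Eventually.of_forall fun y => stdN_sub y)

lemma stdN_cont : Continuous stdN :=
  continuous_iff_continuousAt.2 fun x => (hasDerivAt_stdN x).continuousAt

lemma stdN_neg (x : ℝ) : stdN (-x) = 1 - stdN x := by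
  have h1 : (∫ u in Set.Iic x, stdPdf (-u)) = ∫ u in Set.Ioi (-x), stdPdf u :=
    integral_comp_neg_Iic x stdPdf
  have heven : ∀ u : ℝ, stdPdf (-u) = stdPdf u := fun u => by unfold stdPdf; ring_nf
  have h2 : stdN x = ∫ u in Set.Ioi (-x), stdPdf u := by
    rw [stdN_eq, ← h1]; exact setIntegral_congr_fun measurableSet_Iic fun u _ => (heven u).symm
  have h3 : stdN (-x) + stdN x = 1 := by
    rw [stdN_eq, h2, intervalIntegral.integral_Iic_add_Ioi stdPdf_integrable.integrableOn
      stdPdf_integrable.integrableOn, integral_stdPdf]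
  linarith

lemma stdN_zero : stdN 0 = 1/2 := by
  have := stdN_neg 0; rw [neg_zero] at this; linarith

lemma tendsto_stdN_atTop : Tendsto stdN atTop (𝓝 1) := by
  have h : Tendsto (fun x => stdN 0 + ∫ u in (0:ℝ)..x, stdPdf u) atTop
      (𝓝 (stdN 0 + ∫ u in Set.Ioi (0:ℝ), stdPdf u)) := by
    exact (MeasureTheory.intervalIntegral_tendsto_integral_Ioi 0
      stdPdf_integrable.integrableOn tendsto_id).const_add _
  have htot : stdN 0 + ∫ u in Set.Ioi (0:ℝ), stdPdf u = 1 := by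
    rw [stdN_eq, intervalIntegral.integral_Iic_add_Ioi stdPdf_integrable.integrableOn
      stdPdf_integrable.integrableOn, integral_stdPdf]
  rw [← htot]
  exact h.congr fun x => (stdN_sub x).symm

lemma tendsto_stdN_atBot : Tendsto stdN atBot (𝓝 0) := by
  have h : Tendsto (fun x : ℝ => 1 - stdN (-x)) atBot (𝓝 (1 - 1)) :=
    (tendsto_stdN_atTop.comp tendsto_neg_atBot_atTop).const_sub 1
  simp only [sub_self] at h
  refine h.congr fun x => ?_
  have := stdN_neg (-x); rw [neg_neg] at this; linarith

lemma bs_key (r σ K₀ T t : ℝ) (hσ : 0 < σ) (hK₀ : 0 < K₀) (hτ : 0 < T - t)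
    {x : ℝ} (hx : 0 < x) :
    x * stdPdf (dplus r σ K₀ T t x) =
      K₀ * Real.exp (-r * (T - t)) * stdPdf (dminus r σ K₀ T t x) := by
  set q := Real.sqrt (T - t) with hq_def
  have hq : 0 < q := Real.sqrt_pos.2 hτ
  have hq2 : q^2 = T - t := Real.sq_sqrt hτ.le
  have hL : Real.exp (Real.log (x / K₀)) = x / K₀ := Real.exp_log (by positivity)
  have hdiff : -(dplus r σ K₀ T t x)^2/2 =
      -(dminus r σ K₀ T t x)^2/2 - (Real.log (x/K₀) + r*(T-t)) := by
    unfold dplus dminus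
    rw [← hq_def, ← hq2]
    field_simp
    ring
  unfold stdPdf
  rw [hdiff, Real.exp_sub, Real.exp_add, hL, neg_mul, Real.exp_neg]
  have he : (0:ℝ) < Real.exp (r * (T-t)) := Real.exp_pos _
  have hπ : (0:ℝ) < Real.sqrt (2*Real.pi) := Real.sqrt_pos.2 (by positivity)
  field_simp

lemma hasDerivAt_bsCall_s (r σ K₀ T t : ℝ) (hσ : 0 < σ) (hK₀ : 0 < K₀) (hτ : 0 < T - t)
    {x : ℝ} (hx : 0 < x) :
    HasDerivAt (fun y => bsCall r σ K₀ T t y) (stdN (dplus r σ K₀ T t x)) x := by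
  set v := σ * Real.sqrt (T - t) with hv_def
  have hv : 0 < v := mul_pos hσ (Real.sqrt_pos.2 hτ)
  have hlog : HasDerivAt (fun y => Real.log (y / K₀)) x⁻¹ x := by
    have h := (Real.hasDerivAt_log hx.ne').sub_const (Real.log K₀)
    refine h.congr_of_eventuallyEq ?_
    filter_upwards [eventually_gt_nhds hx] with y hy
    rw [Real.log_div hy.ne' hK₀.ne']
  have hdp : HasDerivAt (fun y => dplus r σ K₀ T t y) (x⁻¹ / v) x :=
    (hlog.add_const _).div_const v
  have hdm : HasDerivAt (fun y => dminus r σ K₀ T t y) (x⁻¹ / v) x :=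
    (hlog.add_const _).div_const v
  have hNp : HasDerivAt (fun y => stdN (dplus r σ K₀ T t y))
      (stdPdf (dplus r σ K₀ T t x) * (x⁻¹ / v)) x :=
    (hasDerivAt_stdN _).comp x hdp
  have hNm : HasDerivAt (fun y => stdN (dminus r σ K₀ T t y))
      (stdPdf (dminus r σ K₀ T t x) * (x⁻¹ / v)) x :=
    (hasDerivAt_stdN _).comp x hdm
  have h1 := (hasDerivAt_id x).mul hNp
  have h2 := hNm.const_mul (K₀ * Real.exp (-r * (T - t)))
  have h := h1.sub h2
  have key := bs_key r σ K₀ T t hσ hK₀ hτ hx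
  have hval : 1 * stdN (dplus r σ K₀ T t x) +
      x * (stdPdf (dplus r σ K₀ T t x) * (x⁻¹ / v)) -
      K₀ * Real.exp (-r * (T - t)) * (stdPdf (dminus r σ K₀ T t x) * (x⁻¹ / v)) =
      stdN (dplus r σ K₀ T t x) := by
    have e : x * (stdPdf (dplus r σ K₀ T t x) * (x⁻¹ / v)) =
        K₀ * Real.exp (-r * (T - t)) * (stdPdf (dminus r σ K₀ T t x) * (x⁻¹ / v)) := by
      rw [← mul_assoc, ← mul_assoc, key]
    rw [e]; ring
  simp only [id_eq] at h
  rw [hval] at h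
  exact h

lemma hasDerivAt_deriv_bsCall_s (r σ K₀ T t : ℝ) (hσ : 0 < σ) (hK₀ : 0 < K₀) (hτ : 0 < T - t)
    {s : ℝ} (hs : 0 < s) :
    HasDerivAt (deriv (fun x => bsCall r σ K₀ T t x))
      (stdPdf (dplus r σ K₀ T t s) * (s⁻¹ / (σ * Real.sqrt (T - t)))) s := by
  have hlog : HasDerivAt (fun y => Real.log (y / K₀)) s⁻¹ s := by
    have h := (Real.hasDerivAt_log hs.ne').sub_const (Real.log K₀)
    refine h.congr_of_eventuallyEq ?_
    filter_upwards [eventually_gt_nhds hs] with y hy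
    rw [Real.log_div hy.ne' hK₀.ne']
  have hdp : HasDerivAt (fun y => dplus r σ K₀ T t y) (s⁻¹ / (σ * Real.sqrt (T - t))) s :=
    (hlog.add_const _).div_const _
  have hNp : HasDerivAt (fun y => stdN (dplus r σ K₀ T t y))
      (stdPdf (dplus r σ K₀ T t s) * (s⁻¹ / (σ * Real.sqrt (T - t)))) s :=
    (hasDerivAt_stdN _).comp s hdp
  refine hNp.congr_of_eventuallyEq ?_
  filter_upwards [eventually_gt_nhds hs] with y hy
  exact (hasDerivAt_bsCall_s r σ K₀ T t hσ hK₀ hτ hy).deriv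

lemma hasDerivAt_d_t (σ T : ℝ) (hσ : 0 < σ) {t : ℝ} (hτ : 0 < T - t) (L a : ℝ) :
    HasDerivAt (fun u => (L + a * (T - u)) / (σ * Real.sqrt (T - u)))
      ((L - a * (T - t)) / (2 * σ * Real.sqrt (T - t) ^ 3)) t := by
  have hq : 0 < Real.sqrt (T - t) := Real.sqrt_pos.2 hτ
  have hq2 : Real.sqrt (T - t) ^ 2 = T - t := Real.sq_sqrt hτ.le
  have hnum : HasDerivAt (fun u => L + a * (T - u)) (-a) t := by
    simpa using (((hasDerivAt_id t).const_sub T).const_mul a).const_add L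
  have h1 : HasDerivAt (fun u : ℝ => T - u) (-1) t := by
    simpa using (hasDerivAt_id t).const_sub T
  have hsq : HasDerivAt (fun u => Real.sqrt (T - u)) (1 / (2 * Real.sqrt (T - t)) * (-1)) t :=
    (Real.hasDerivAt_sqrt (ne_of_gt hτ)).comp t h1
  have hden : HasDerivAt (fun u => σ * Real.sqrt (T - u))
      (σ * (1 / (2 * Real.sqrt (T - t)) * (-1))) t := hsq.const_mul σ
  have hden_ne : σ * Real.sqrt (T - t) ≠ 0 := by positivity
  have h := hnum.div hden hden_ne
  refine h.congr_deriv ?_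
  set q := Real.sqrt (T - t) with hqd
  rw [show T - t = q^2 from hq2.symm]
  field_simp
  ring

lemma hasDerivAt_bsCall_t (r σ K₀ T : ℝ) (hσ : 0 < σ) {t s : ℝ} (hτ : 0 < T - t)
    (hs : 0 < s) :
    HasDerivAt (fun u => bsCall r σ K₀ T u s)
      (s * (stdPdf (dplus r σ K₀ T t s) *
          ((Real.log (s / K₀) - (r + σ^2/2) * (T - t)) / (2 * σ * Real.sqrt (T - t) ^ 3))) -
        (K₀ * (Real.exp (-r * (T - t)) * r) * stdN (dminus r σ K₀ T t s) +
          K₀ * Real.exp (-r * (T - t)) * (stdPdf (dminus r σ K₀ T t s) *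
            ((Real.log (s / K₀) - (r - σ^2/2) * (T - t)) / (2 * σ * Real.sqrt (T - t) ^ 3))))) t := by
  have hdp : HasDerivAt (fun u => dplus r σ K₀ T u s)
      ((Real.log (s / K₀) - (r + σ^2/2) * (T - t)) / (2 * σ * Real.sqrt (T - t) ^ 3)) t :=
    hasDerivAt_d_t σ T hσ hτ _ _
  have hdm : HasDerivAt (fun u => dminus r σ K₀ T u s)
      ((Real.log (s / K₀) - (r - σ^2/2) * (T - t)) / (2 * σ * Real.sqrt (T - t) ^ 3)) t :=
    hasDerivAt_d_t σ T hσ hτ _ _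
  have hNp := ((hasDerivAt_stdN _).comp t hdp).const_mul s
  have hexp0 : HasDerivAt (fun u : ℝ => -r * (T - u)) r t := by
    have := ((hasDerivAt_id t).const_sub T).const_mul (-r)
    simpa using this
  have hexp : HasDerivAt (fun u => Real.exp (-r * (T - u))) (Real.exp (-r * (T - t)) * r) t :=
    hexp0.exp
  have hC := hexp.const_mul K₀
  have hNm := (hasDerivAt_stdN _).comp t hdm
  have hprod := hC.mul hNm
  have h := hNp.sub hprod
  convert h using 2 <;> rfl

lemma tendsto_sqrt_zero : Tendsto (fun τ : ℝ => Real.sqrt τ) (𝓝[>] (0:ℝ)) (𝓝[>] 0) := by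
  refine tendsto_nhdsWithin_of_tendsto_nhds_of_eventually_within _ ?_ ?_
  · have h := Real.continuous_sqrt.tendsto 0
    rw [Real.sqrt_zero] at h
    exact h.mono_left nhdsWithin_le_nhds
  · filter_upwards [self_mem_nhdsWithin] with τ (hτ : 0 < τ)
    exact Real.sqrt_pos.2 hτ

lemma d_eventual_eq (σ L a : ℝ) (hσ : 0 < σ) :
    ∀ᶠ τ in 𝓝[>] (0:ℝ),
      (L + a * τ) / (σ * Real.sqrt τ) = (L/σ) * (Real.sqrt τ)⁻¹ + (a/σ) * Real.sqrt τ := by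
  filter_upwards [self_mem_nhdsWithin] with τ (hτ : 0 < τ)
  have hq : 0 < Real.sqrt τ := Real.sqrt_pos.2 hτ
  have hq2 : Real.sqrt τ ^ 2 = τ := Real.sq_sqrt hτ.le
  set q := Real.sqrt τ with hqd
  rw [show τ = q^2 from hq2.symm]
  field_simp

lemma tendsto_d_atTop (σ L a : ℝ) (hσ : 0 < σ) (hL : 0 < L) :
    Tendsto (fun τ => (L + a * τ) / (σ * Real.sqrt τ)) (𝓝[>] (0:ℝ)) atTop := by
  have h1 : Tendsto (fun τ : ℝ => (L/σ) * (Real.sqrt τ)⁻¹) (𝓝[>] (0:ℝ)) atTop :=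
    (tendsto_inv_nhdsGT_zero.comp tendsto_sqrt_zero).const_mul_atTop (by positivity)
  have h2 : Tendsto (fun τ : ℝ => (a/σ) * Real.sqrt τ) (𝓝[>] (0:ℝ)) (𝓝 ((a/σ) * 0)) :=
    ((tendsto_sqrt_zero.mono_right nhdsWithin_le_nhds).const_mul _)
  refine (h1.atTop_add h2).congr' ?_
  filter_upwards [d_eventual_eq σ L a hσ] with τ h
  exact h.symm

lemma tendsto_d_atBot (σ L a : ℝ) (hσ : 0 < σ) (hL : L < 0) :
    Tendsto (fun τ => (L + a * τ) / (σ * Real.sqrt τ)) (𝓝[>] (0:ℝ)) atBot := by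
  have h := tendsto_d_atTop σ (-L) (-a) hσ (by linarith)
  have h2 : Tendsto (fun τ => -((-L + -a * τ) / (σ * Real.sqrt τ))) (𝓝[>] (0:ℝ)) atBot :=
    tendsto_neg_atTop_atBot.comp h
  refine h2.congr fun τ => ?_
  rw [← neg_div]
  ring_nf

lemma tendsto_d_zero (σ a : ℝ) (hσ : 0 < σ) :
    Tendsto (fun τ => ((0:ℝ) + a * τ) / (σ * Real.sqrt τ)) (𝓝[>] (0:ℝ)) (𝓝 0) := by
  have h2 : Tendsto (fun τ : ℝ => (a/σ) * Real.sqrt τ) (𝓝[>] (0:ℝ)) (𝓝 ((a/σ) * 0)) :=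
    ((tendsto_sqrt_zero.mono_right nhdsWithin_le_nhds).const_mul _)
  rw [mul_zero] at h2
  refine h2.congr' ?_
  filter_upwards [d_eventual_eq σ 0 a hσ] with τ hτ
  rw [hτ, zero_div, zero_mul, zero_add]

lemma tendsto_exp_neg_zero (r : ℝ) :
    Tendsto (fun τ : ℝ => Real.exp (-r * τ)) (𝓝[>] (0:ℝ)) (𝓝 1) := by
  have h : Tendsto (fun τ : ℝ => Real.exp (-r * τ)) (𝓝 0) (𝓝 (Real.exp (-r * 0))) :=
    (Real.continuous_exp.comp (continuous_const.mul continuous_id)).tendsto 0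
  rw [mul_zero, Real.exp_zero] at h
  exact h.mono_left nhdsWithin_le_nhds

theorem stmt_17 (r σ K₀ T : ℝ) (hσ : 0 < σ) (hK₀ : 0 < K₀) (hT : 0 < T) :
    (∀ t ∈ Set.Ioo (0:ℝ) T, ∀ s ∈ Set.Ioi (0:ℝ),
      ∃ ηt ηs ηss : ℝ,
        HasDerivAt (fun u => bsCall r σ K₀ T u s) ηt t ∧
        HasDerivAt (fun x => bsCall r σ K₀ T t x) ηs s ∧
        HasDerivAt (deriv (fun x => bsCall r σ K₀ T t x)) ηss s ∧
        ηt + r * s * ηs + (1/2) * σ^2 * s^2 * ηss = r * bsCall r σ K₀ T t s) ∧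
    (∀ s ∈ Set.Ioi (0:ℝ),
      Tendsto (fun t => bsCall r σ K₀ T t s) (nhdsWithin T (Set.Iio T))
        (nhds (max (s - K₀) 0))) := by
  constructor
  · rintro t ⟨ht0, htT⟩ s hs
    have hτ : 0 < T - t := sub_pos.2 htT
    have hs' : 0 < s := hs
    refine ⟨_, _, _, hasDerivAt_bsCall_t r σ K₀ T hσ hτ hs',
      hasDerivAt_bsCall_s r σ K₀ T t hσ hK₀ hτ hs',
      hasDerivAt_deriv_bsCall_s r σ K₀ T t hσ hK₀ hτ hs', ?_⟩
    have key := bs_key r σ K₀ T t hσ hK₀ hτ hs'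
    have hq : 0 < Real.sqrt (T - t) := Real.sqrt_pos.2 hτ
    have hq2 : Real.sqrt (T - t) ^ 2 = T - t := Real.sq_sqrt hτ.le
    simp only [bsCall]
    set P := stdPdf (dplus r σ K₀ T t s) with hP
    set Pm := stdPdf (dminus r σ K₀ T t s) with hPm
    set Np := stdN (dplus r σ K₀ T t s) with hNp
    set Nm := stdN (dminus r σ K₀ T t s) with hNm
    set E := Real.exp (-r * (T - t)) with hE
    set L := Real.log (s / K₀) with hL
    set q := Real.sqrt (T - t) with hqd
    have e1 : K₀ * E * (Pm * ((L - (r - σ^2/2) * (T - t)) / (2 * σ * q ^ 3))) =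
        s * (P * ((L - (r - σ^2/2) * (T - t)) / (2 * σ * q ^ 3))) := by
      rw [← mul_assoc, ← key, mul_assoc]
    rw [e1, show T - t = q^2 from hq2.symm]
    field_simp
    ring
  · rintro s hs
    have hs' : 0 < s := hs
    have hmap : Tendsto (fun t => T - t) (𝓝[<] T) (𝓝[>] (0:ℝ)) := by
      refine tendsto_nhdsWithin_of_tendsto_nhds_of_eventually_within _ ?_ ?_
      · have h : Tendsto (fun t : ℝ => T - t) (𝓝 T) (𝓝 (T - T)) :=
          (continuous_const.sub continuous_id).tendsto T
        rw [sub_self] at h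
        exact h.mono_left nhdsWithin_le_nhds
      · filter_upwards [self_mem_nhdsWithin] with t (ht : t < T)
        exact sub_pos.2 ht
    set L := Real.log (s / K₀) with hL_def
    have key : Tendsto (fun τ : ℝ =>
        s * stdN ((L + (r + σ^2/2) * τ) / (σ * Real.sqrt τ))
        - K₀ * Real.exp (-r * τ) * stdN ((L + (r - σ^2/2) * τ) / (σ * Real.sqrt τ)))
        (𝓝[>] (0:ℝ)) (𝓝 (max (s - K₀) 0)) := by
      have he := tendsto_exp_neg_zero r
      rcases lt_trichotomy s K₀ with hlt | heq | hgt
      · have hLneg : L < 0 := Real.log_neg (by positivity) ((div_lt_one hK₀).2 hlt)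
        have hNp := tendsto_stdN_atBot.comp (tendsto_d_atBot σ L (r + σ^2/2) hσ hLneg)
        have hNm := tendsto_stdN_atBot.comp (tendsto_d_atBot σ L (r - σ^2/2) hσ hLneg)
        have h := (hNp.const_mul s).sub ((he.const_mul K₀).mul hNm)
        simp only [mul_zero, mul_one, sub_zero, sub_self] at h
        have hmax : max (s - K₀) 0 = 0 := max_eq_right (by linarith)
        rw [hmax]
        exact h
      · have hL0 : L = 0 := by
          rw [hL_def, heq, div_self hK₀.ne', Real.log_one]
        have hc : Tendsto stdN (𝓝 0) (𝓝 (stdN 0)) := stdN_cont.continuousAt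
        rw [stdN_zero] at hc
        have hdp : Tendsto (fun τ => (L + (r + σ^2/2) * τ) / (σ * Real.sqrt τ))
            (𝓝[>] (0:ℝ)) (𝓝 0) := by
          rw [hL0]; exact tendsto_d_zero σ _ hσ
        have hdm : Tendsto (fun τ => (L + (r - σ^2/2) * τ) / (σ * Real.sqrt τ))
            (𝓝[>] (0:ℝ)) (𝓝 0) := by
          rw [hL0]; exact tendsto_d_zero σ _ hσ
        have hNp := hc.comp hdp
        have hNm := hc.comp hdm
        have h := (hNp.const_mul s).sub ((he.const_mul K₀).mul hNm)
        have hmax : max (s - K₀) 0 = 0 := by rw [heq]; simp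
        rw [hmax]
        have hval : s * (1/2) - K₀ * 1 * (1/2) = 0 := by rw [heq]; ring
        rw [hval] at h
        exact h
      · have hLpos : 0 < L := Real.log_pos ((one_lt_div hK₀).2 hgt)
        have hNp := tendsto_stdN_atTop.comp (tendsto_d_atTop σ L (r + σ^2/2) hσ hLpos)
        have hNm := tendsto_stdN_atTop.comp (tendsto_d_atTop σ L (r - σ^2/2) hσ hLpos)
        have h := (hNp.const_mul s).sub ((he.const_mul K₀).mul hNm)
        have hmax : max (s - K₀) 0 = s - K₀ := max_eq_left (by linarith)
        rw [hmax]
        have hval : s * 1 - K₀ * 1 * 1 = s - K₀ := by ring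
        rw [hval] at h
        exact h
    have := key.comp hmap
    refine this.congr fun t => ?_
    simp only [Function.comp, bsCall, dplus, dminus]
    rw [hL_def]
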